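/- Let $\Xi$ be a generalized stealthy random measure on $\mathbb{R}^d$ with gap $U$ and intensity $\rho > 0$. Then there is an event of probability $1$ on which the following holds simultaneously for every Schwartz function $\varphi : \mathbb{R}^d \to \mathbb{C}$ whose Fourier transform $\mathcal{F}\varphi$ has compact support contained in $U$: the function $\varphi$ is integrable with respect to the realized measure $\Xi_\omega$ and $\int_{\mathbb{R}^d} \varphi \, \mathrm{d}\Xi_\omega = \rho \int_{\mathbb{R}^d} \varphi(x)\,\mathrm{d}x$. -/

import Mathlib

open MeasureTheory ProbabilityTheory Metric
open scoped FourierTransform RealInnerProductSpace BigOperators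

noncomputable section

/-- Euclidean space `ℝ^d`. -/
abbrev Ed (d : ℕ) := EuclideanSpace ℝ (Fin d)

/-- A random measure `Ξ` has intensity `ρ` and structure function `S` if, for every
Schwartz test function `φ`, the linear statistic `I(φ) = ∫ φ d[Ξ]` is square integrable,
has mean `ρ ∫ φ`, and has variance `∫ |𝓕φ(ξ)|² S(ξ) dξ`. -/
def HasIntensityAndStructure {d : ℕ} {Ω : Type*} [MeasurableSpace Ω]
    (P : Measure Ω) (Ξ : Ω → Measure (Ed d)) (ρ : ℝ) (S : Ed d → ℝ) : Prop :=
  ∀ φ : SchwartzMap (Ed d) ℂ,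
    MemLp (fun ω => ∫ x, φ x ∂(Ξ ω)) 2 P ∧
    (∫ ω, (∫ x, φ x ∂(Ξ ω)) ∂P) = (ρ : ℂ) * (∫ x, φ x) ∧
    (∫ ω, ‖(∫ x, φ x ∂(Ξ ω)) - (∫ ω', (∫ x, φ x ∂(Ξ ω')) ∂P)‖ ^ 2 ∂P)
      = (∫ ξ, ‖𝓕 (fun x => (φ x : ℂ)) ξ‖ ^ 2 * S ξ)

/-- weight -/
def stW (d : ℕ) (x : Ed d) : ℝ := ((1 + ‖x‖^2) ^ (d+1))⁻¹

lemma stW_pos {d : ℕ} (x : Ed d) : 0 < stW d x := by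
  unfold stW; positivity

lemma stW_contDiff (d : ℕ) : ContDiff ℝ ((⊤:ℕ∞)) (stW d) := by
  unfold stW
  have h : ContDiff ℝ ((⊤:ℕ∞)) (fun x : Ed d => (1 + ‖x‖^2) ^ (d+1)) :=
    (contDiff_const.add (contDiff_norm_sq ℝ)).pow _
  exact h.inv (fun x => by positivity)

lemma stW_continuous (d : ℕ) : Continuous (stW d) := (stW_contDiff d).continuous

lemma st_pow_le {d : ℕ} (x : Ed d) : ((1 + ‖x‖) ^ (2*d+2) : ℝ) ≤ 2^(d+1) * (1 + ‖x‖^2) ^ (d+1) := by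
  have hn : (0:ℝ) ≤ ‖x‖ := norm_nonneg x
  have h0 : ((1 + ‖x‖) ^ (2*d+2) : ℝ) = ((1+‖x‖)^2)^(d+1) := by
    rw [← pow_mul]; ring_nf
  rw [h0]
  have h3 : ((1+‖x‖)^2 : ℝ) ≤ 2 * (1 + ‖x‖^2) := by nlinarith [sq_nonneg (1 - ‖x‖)]
  calc ((1+‖x‖)^2 : ℝ)^(d+1) ≤ (2 * (1 + ‖x‖^2))^(d+1) :=
        pow_le_pow_left₀ (by positivity) h3 _
    _ = 2^(d+1) * (1 + ‖x‖^2) ^ (d+1) := by rw [mul_pow]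

lemma stW_le {d : ℕ} (x : Ed d) : stW d x ≤ 2^(d+1) * (1 + ‖x‖) ^ (-(2*(d:ℝ)+2)) := by
  have hn : (0:ℝ) ≤ ‖x‖ := norm_nonneg x
  have h1 : (1 + ‖x‖) ^ (-(2*(d:ℝ)+2)) = ((1 + ‖x‖) ^ (2*(d:ℕ)+2) : ℝ)⁻¹ := by
    rw [Real.rpow_neg (by positivity), ← Real.rpow_natCast (1 + ‖x‖) (2*d+2)]
    norm_num
  rw [h1]
  unfold stW
  rw [inv_le_iff_one_le_mul₀ (by positivity)]
  have h2 := st_pow_le x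
  have hp1 : (0:ℝ) < (1 + ‖x‖) ^ (2*(d:ℕ)+2) := by positivity
  have hp2 : (0:ℝ) < (1 + ‖x‖^2) ^ (d+1) := by positivity
  nlinarith [mul_le_mul_of_nonneg_left h2 (le_of_lt (inv_pos.2 hp1)),
    mul_inv_cancel₀ (ne_of_gt hp1), le_of_lt (inv_pos.2 hp1)]

lemma stW_integrable (d : ℕ) : Integrable (stW d) (volume : Measure (Ed d)) := by
  have hnr : ((Module.finrank ℝ (Ed d) : ℝ)) < 2*(d:ℝ)+2 := by
    simp [finrank_euclideanSpace]; nlinarith [Nat.cast_nonneg (α := ℝ) d]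
  have h := (integrable_one_add_norm (E := Ed d) (μ := volume) hnr).const_mul ((2:ℝ)^(d+1))
  refine h.mono' ((stW_continuous d).aestronglyMeasurable) ?_
  filter_upwards with x
  rw [Real.norm_eq_abs, abs_of_pos (stW_pos x)]
  exact stW_le x

/-- The master seminorm. -/
def stSB {d : ℕ} (φ : SchwartzMap (Ed d) ℂ) : ℝ :=
  ((Finset.Iic (2*d+2, 0)).sup (fun m => SchwartzMap.seminorm ℝ m.1 m.2) :
    Seminorm ℝ (SchwartzMap (Ed d) ℂ)) φ

lemma stSB_nonneg {d : ℕ} (φ : SchwartzMap (Ed d) ℂ) : 0 ≤ stSB φ :=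
  apply_nonneg _ _

lemma schwartz_le_stW {d : ℕ} (φ : SchwartzMap (Ed d) ℂ) (x : Ed d) :
    ‖φ x‖ ≤ 2^(2*d+2) * stSB φ * stW d x := by
  have h := SchwartzMap.one_add_le_sup_seminorm_apply (𝕜 := ℝ) (m := (2*d+2, 0))
    le_rfl le_rfl φ x
  rw [norm_iteratedFDeriv_zero] at h
  have hq : (0:ℝ) < (1 + ‖x‖^2) ^ (d+1) := by positivity
  rw [show (2:ℝ)^(2*d+2) * stSB φ * stW d x
      = (2^(2*d+2) * stSB φ) / ((1 + ‖x‖^2) ^ (d+1)) by rw [div_eq_mul_inv]; rfl,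
    le_div_iff₀ hq]
  have hmono : ((1 + ‖x‖^2) ^ (d+1) : ℝ) ≤ (1 + ‖x‖) ^ (2*d+2) := by
    have h0 : ((1 + ‖x‖) ^ (2*d+2) : ℝ) = ((1+‖x‖)^2)^(d+1) := by
      rw [← pow_mul]; ring_nf
    rw [h0]
    refine pow_le_pow_left₀ (by positivity) ?_ _
    nlinarith [norm_nonneg x]
  calc ‖φ x‖ * (1 + ‖x‖^2) ^ (d+1) ≤ ‖φ x‖ * (1 + ‖x‖) ^ (2*d+2) := by
        exact mul_le_mul_of_nonneg_left hmono (norm_nonneg _)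
    _ = (1 + ‖x‖) ^ (2*d+2) * ‖φ x‖ := by ring
    _ ≤ _ := h

/-- Schwartz map from a smooth compactly supported function. -/
def mkCS {d : ℕ} (f : Ed d → ℂ) (h1 : ContDiff ℝ ((⊤:ℕ∞)) f) (h2 : HasCompactSupport f) :
    SchwartzMap (Ed d) ℂ where
  toFun := f
  smooth' := h1
  decay' := by
    intro k n
    have hg : Continuous fun x => ‖x‖^k * ‖iteratedFDeriv ℝ n f x‖ := by
      exact (continuous_norm.pow k).mul (h1.continuous_iteratedFDeriv (mod_cast le_top)).norm
    have hgc : HasCompactSupport fun x => ‖x‖^k * ‖iteratedFDeriv ℝ n f x‖ := by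
      apply HasCompactSupport.mul_left
      exact (h2.iteratedFDeriv n).norm
    obtain ⟨C, hC⟩ := hg.bounded_above_of_compact_support hgc
    refine ⟨C, fun x => ?_⟩
    have := hC x
    rw [Real.norm_eq_abs] at this
    exact (le_abs_self _).trans this

/-- bump functions -/
def stBump (d k : ℕ) : ContDiffBump (0 : Ed d) :=
  ⟨k+1, k+2, by positivity, by linarith⟩

lemma stBump_mono {d k : ℕ} (x : Ed d) : stBump d k x ≤ stBump d (k+1) x := by
  by_cases hx : x ∈ Metric.ball (0 : Ed d) (k+2)
  · have h1 : stBump d (k+1) x = 1 := by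
      apply ContDiffBump.one_of_mem_closedBall
      have : ((k:ℝ)+2) ≤ (stBump d (k+1)).rIn := by
        show ((k:ℝ)+2) ≤ ((k+1:ℕ):ℝ)+1
        push_cast; linarith
      exact Metric.closedBall_subset_closedBall this (Metric.ball_subset_closedBall hx)
    rw [h1]; exact (stBump d k).le_one
  · have h0 : stBump d k x = 0 := by
      have : x ∉ Function.support (stBump d k) := by
        rw [ContDiffBump.support_eq]
        exact fun h => hx h
      simpa [Function.mem_support, not_not] using this
    rw [h0]; exact (stBump d (k+1)).nonneg

lemma stBump_one {d : ℕ} (x : Ed d) {k : ℕ} (hk : ‖x‖ ≤ k+1) : stBump d k x = 1 := by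
  apply ContDiffBump.one_of_mem_closedBall
  rw [Metric.mem_closedBall, dist_zero_right]; exact hk

/-- cutoff Schwartz functions -/
def stCut (d k : ℕ) : SchwartzMap (Ed d) ℂ :=
  mkCS (fun x => ((stBump d k x * stW d x : ℝ) : ℂ))
    (Complex.ofRealCLM.contDiff.comp (((stBump d k).contDiff).mul (stW_contDiff d)))
    (by
      apply HasCompactSupport.comp_left (g := (Complex.ofReal : ℝ → ℂ))
        (f := fun x => stBump d k x * stW d x)
      · exact (stBump d k).hasCompactSupport.mul_right
      · simp)

lemma stCut_apply {d k : ℕ} (x : Ed d) :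
    stCut d k x = ((stBump d k x * stW d x : ℝ) : ℂ) := rfl

lemma stBernstein {d : ℕ} (η : SchwartzMap (Ed d) ℂ) (x : Ed d) :
    ‖η x‖ ≤ ∫ ξ, ‖𝓕 (⇑η) ξ‖ := by
  have hinv : ⇑η = 𝓕⁻ (𝓕 ⇑η) := by
    have h1 : (𝓕⁻ (𝓕 η : SchwartzMap (Ed d) ℂ) : SchwartzMap (Ed d) ℂ) = η :=
      FourierPair.fourierInv_fourier_eq η
    calc ⇑η = ⇑(𝓕⁻ (𝓕 η : SchwartzMap (Ed d) ℂ) : SchwartzMap (Ed d) ℂ) := by rw [h1]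
      _ = 𝓕⁻ ⇑(𝓕 η : SchwartzMap (Ed d) ℂ) := SchwartzMap.fourierInv_coe _
      _ = 𝓕⁻ (𝓕 ⇑η) := by rw [SchwartzMap.fourier_coe]
  conv_lhs => rw [hinv]
  rw [Real.fourierInv_eq]
  refine (norm_integral_le_integral_norm _).trans ?_
  refine le_of_eq (integral_congr_ae (Filter.Eventually.of_forall fun ξ => ?_))
  simp [Circle.norm_smul]

/-- the class of band-limited Schwartz functions with seminorm bound -/
def stC {d : ℕ} (U : Set (Ed d)) (M : ℕ) : Set (SchwartzMap (Ed d) ℂ) :=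
  {φ | tsupport (𝓕 ⇑φ) ⊆ U ∧ stSB φ ≤ M}

lemma stC_zero_mem {d : ℕ} (U : Set (Ed d)) (M : ℕ) :
    (0 : SchwartzMap (Ed d) ℂ) ∈ stC U M := by
  constructor
  · have h0 : 𝓕 ⇑(0 : SchwartzMap (Ed d) ℂ) = fun _ => (0:ℂ) := by
      ext ξ
      simp only [SchwartzMap.coe_zero]
      simp [Real.fourier_eq]
    rw [h0]
    have : Function.support (fun _ : Ed d => (0:ℂ)) = ∅ := Function.support_zero
    rw [tsupport, this, closure_empty]
    exact Set.empty_subset _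
  · rw [stSB, map_zero]
    positivity

/-- the Fourier-L¹ embedding -/
def stG {d : ℕ} (φ : SchwartzMap (Ed d) ℂ) : Lp ℂ 1 (volume : Measure (Ed d)) :=
  (memLp_one_iff_integrable.2
    (SchwartzMap.integrable (SchwartzMap.fourierTransformCLM ℂ φ))).toLp _

lemma stG_dist {d : ℕ} (a b : SchwartzMap (Ed d) ℂ) :
    dist (stG a) (stG b) = ∫ ξ, ‖𝓕 (⇑a) ξ - 𝓕 (⇑b) ξ‖ := by
  have ha := memLp_one_iff_integrable.2
    (SchwartzMap.integrable (μ := volume) (SchwartzMap.fourierTransformCLM ℂ a))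
  have hb := memLp_one_iff_integrable.2
    (SchwartzMap.integrable (μ := volume) (SchwartzMap.fourierTransformCLM ℂ b))
  have hsub : Integrable (⇑(SchwartzMap.fourierTransformCLM ℂ a)
      - ⇑(SchwartzMap.fourierTransformCLM ℂ b)) (volume : Measure (Ed d)) :=
    (SchwartzMap.integrable _).sub (SchwartzMap.integrable _)
  rw [dist_eq_norm, stG, stG, ← MeasureTheory.MemLp.toLp_sub ha hb, MeasureTheory.Lp.norm_toLp]
  rw [eLpNorm_one_eq_lintegral_enorm]
  rw [← MeasureTheory.ofReal_integral_norm_eq_lintegral_enorm hsub,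
    ENNReal.toReal_ofReal (by positivity)]
  congr 1

lemma stDense {d : ℕ} (U : Set (Ed d)) (M : ℕ) :
    ∃ e : ℕ → SchwartzMap (Ed d) ℂ, (∀ i, e i ∈ stC U M) ∧
      ∀ φ ∈ stC U M, ∀ ε : ℝ, 0 < ε → ∃ i, ∫ ξ, ‖𝓕 (⇑(e i)) ξ - 𝓕 (⇑φ) ξ‖ < ε := by
  haveI : Fact ((1:ENNReal) ≤ 1) := ⟨le_rfl⟩
  haveI : Fact ((1:ENNReal) ≠ ⊤) := ⟨by simp⟩
  set s : Set (Lp ℂ 1 (volume : Measure (Ed d))) := stG '' stC U M with hs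
  have hne : s.Nonempty := ⟨stG 0, Set.mem_image_of_mem _ (stC_zero_mem U M)⟩
  haveI : Nonempty ↥s := hne.to_subtype
  obtain ⟨t, htc, htd⟩ := TopologicalSpace.exists_countable_dense ↥s
  have htne : t.Nonempty := htd.nonempty
  obtain ⟨e0, he0⟩ := htc.exists_eq_range htne
  rw [he0] at htd
  have hch : ∀ i : ℕ, ∃ φ, φ ∈ stC U M ∧ stG φ = ((e0 i) : Lp ℂ 1 (volume : Measure (Ed d))) := by
    intro i
    rcases (e0 i).2 with ⟨φ, hφ, h⟩
    exact ⟨φ, hφ, h⟩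
  choose e he1 he2 using hch
  refine ⟨e, he1, ?_⟩
  intro φ hφ ε hε
  have hmem : stG φ ∈ s := Set.mem_image_of_mem _ hφ
  obtain ⟨i, hi⟩ := Metric.denseRange_iff.1 (htd : DenseRange e0) ⟨stG φ, hmem⟩ ε hε
  rw [Subtype.dist_eq] at hi
  refine ⟨i, ?_⟩
  have : dist (stG φ) (stG (e i)) < ε := by
    rw [he2 i]
    exact hi
  rw [stG_dist] at this
  calc ∫ ξ, ‖𝓕 (⇑(e i)) ξ - 𝓕 (⇑φ) ξ‖ = ∫ ξ, ‖𝓕 (⇑φ) ξ - 𝓕 (⇑(e i)) ξ‖ := by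
        congr 1; ext ξ; rw [norm_sub_rev]
    _ < ε := this

lemma exact_single {d : ℕ} {Ω : Type*} [MeasurableSpace Ω] (P : Measure Ω)
    [IsProbabilityMeasure P] (Ξ : Ω → Measure (Ed d)) (ρ : ℝ) (S : Ed d → ℝ)
    (hIS : HasIntensityAndStructure P Ξ ρ S) (U : Set (Ed d))
    (hgap : ∀ ξ ∈ U, S ξ = 0)
    (φ : SchwartzMap (Ed d) ℂ) (hU : tsupport (𝓕 ⇑φ) ⊆ U) :
    ∀ᵐ ω ∂P, (∫ x, φ x ∂(Ξ ω)) = (ρ:ℂ) * ∫ x, φ x := by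
  obtain ⟨h1, h2, h3⟩ := hIS φ
  set I := fun ω => ∫ x, φ x ∂(Ξ ω) with hIdef
  set m : ℂ := ∫ ω, I ω ∂P with hm
  have hz : (∫ ξ, ‖𝓕 (fun x => (φ x : ℂ)) ξ‖^2 * S ξ) = (0:ℝ) := by
    have hzz : ∀ ξ, ‖𝓕 (fun x => (φ x : ℂ)) ξ‖^2 * S ξ = 0 := by
      intro ξ
      by_cases hξ : ξ ∈ U
      · rw [hgap ξ hξ, mul_zero]
      · have h0 : 𝓕 (⇑φ) ξ = 0 := image_eq_zero_of_notMem_tsupport (fun hc => hξ (hU hc))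
        rw [show (𝓕 (fun x => (φ x : ℂ))) = 𝓕 ⇑φ from rfl, h0]
        simp
    calc (∫ ξ, ‖𝓕 (fun x => (φ x : ℂ)) ξ‖^2 * S ξ) = ∫ _ξ : Ed d, (0:ℝ) := by
          congr 1; funext ξ; exact hzz ξ
      _ = 0 := integral_zero _ _
  rw [hz] at h3
  have hInt : Integrable (fun ω => ‖I ω - m‖^2) P := by
    have h4 : MemLp (fun ω => I ω - m) 2 P := h1.sub (memLp_const m)
    have h5 := h4.integrable_norm_rpow (by norm_num) (by norm_num)
    refine h5.congr (Filter.Eventually.of_forall fun ω => ?_)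
    have he : ((2:ENNReal)).toReal = ((2:ℕ):ℝ) := by norm_num
    show ‖I ω - m‖ ^ ((2:ENNReal)).toReal = ‖I ω - m‖ ^ (2:ℕ)
    rw [he, Real.rpow_natCast]
  have h6 : (fun ω => ‖I ω - m‖^2) =ᵐ[P] 0 :=
    (integral_eq_zero_iff_of_nonneg (fun ω => by positivity) hInt).1 h3
  filter_upwards [h6] with ω hω
  have hh : ‖I ω - m‖^2 = 0 := hω
  have h7 : I ω = m := by
    have := pow_eq_zero_iff (n := 2) (by norm_num) |>.1 hh
    rwa [norm_eq_zero, sub_eq_zero] at this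
  exact h7.trans h2

lemma eventA {d : ℕ} {Ω : Type*} [MeasurableSpace Ω] (P : Measure Ω)
    [IsProbabilityMeasure P] (Ξ : Ω → Measure (Ed d)) (hΞmeas : Measurable Ξ)
    (hΞloc : ∀ ω, IsLocallyFiniteMeasure (Ξ ω)) (ρ : ℝ) (hρ : 0 < ρ) (S : Ed d → ℝ)
    (hIS : HasIntensityAndStructure P Ξ ρ S) :
    ∀ᵐ ω ∂P, (∫⁻ x, ENNReal.ofReal (stW d x) ∂(Ξ ω)) < ⊤ := by
  set f : ℕ → Ed d → ℝ := fun k x => stBump d k x * stW d x with hf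
  have hfc : ∀ k, Continuous (f k) := fun k => ((stBump d k).continuous).mul (stW_continuous d)
  have hfcs : ∀ k, HasCompactSupport (f k) := fun k => (stBump d k).hasCompactSupport.mul_right
  have hfnn : ∀ k x, 0 ≤ f k x := fun k x => mul_nonneg ((stBump d k).nonneg) (stW_pos x).le
  have hfmono : ∀ (x : Ed d), Monotone fun k => f k x := fun x =>
    monotone_nat_of_le_succ fun k =>
      mul_le_mul_of_nonneg_right (stBump_mono x) (stW_pos x).le
  have hfle : ∀ k x, f k x ≤ stW d x := fun k x =>
    mul_le_of_le_one_left (stW_pos x).le ((stBump d k).le_one)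
  have hintx : ∀ k ω, Integrable (f k) (Ξ ω) := fun k ω => by
    haveI := hΞloc ω
    exact (hfc k).integrable_of_hasCompactSupport (hfcs k)
  have hintLeb : ∀ k, Integrable (f k) (volume : Measure (Ed d)) := fun k =>
    (hfc k).integrable_of_hasCompactSupport (hfcs k)
  have hcut : ∀ (k : ℕ) (μ : Measure (Ed d)), ∫ x, stCut d k x ∂μ = ((∫ x, f k x ∂μ : ℝ) : ℂ) := by
    intro k μ
    simp_rw [stCut_apply]
    exact integral_ofReal
  set G : ℕ → Ω → ℝ := fun k ω => ∫ x, f k x ∂(Ξ ω) with hG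
  have hGnn : ∀ k ω, 0 ≤ G k ω := fun k ω => integral_nonneg (fun x => hfnn k x)
  have hGint : ∀ k, Integrable (G k) P := by
    intro k
    have h2 : Integrable (fun ω => ∫ x, stCut d k x ∂(Ξ ω)) P :=
      memLp_one_iff_integrable.1 ((hIS (stCut d k)).1.mono_exponent (by norm_num))
    have h3 := h2.re
    refine h3.congr (Filter.Eventually.of_forall fun ω => ?_)
    show RCLike.re (∫ x, stCut d k x ∂(Ξ ω)) = G k ω
    rw [hcut k (Ξ ω)]
    simp
    rfl
  have hGmean : ∀ k, ∫ ω, G k ω ∂P = ρ * ∫ x, f k x := by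
    intro k
    have h2 := (hIS (stCut d k)).2.1
    have h4 : (∫ ω, (∫ x, stCut d k x ∂(Ξ ω)) ∂P) = ((∫ ω, G k ω ∂P : ℝ) : ℂ) := by
      simp_rw [hcut]
      exact integral_ofReal
    rw [h4, hcut k volume] at h2
    exact_mod_cast h2
  have hFk : ∀ k ω, ∫⁻ x, ENNReal.ofReal (f k x) ∂(Ξ ω) = ENNReal.ofReal (G k ω) := fun k ω =>
    (MeasureTheory.ofReal_integral_eq_lintegral_ofReal (hintx k ω)
      (Filter.Eventually.of_forall (hfnn k))).symm
  have hmeasF : ∀ k, Measurable fun ω => ∫⁻ x, ENNReal.ofReal (f k x) ∂(Ξ ω) := fun k =>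
    (Measure.measurable_lintegral ((hfc k).measurable.ennreal_ofReal)).comp hΞmeas
  have hWmeas : Measurable fun ω => ∫⁻ x, ENNReal.ofReal (stW d x) ∂(Ξ ω) :=
    (Measure.measurable_lintegral ((stW_continuous d).measurable.ennreal_ofReal)).comp hΞmeas
  have hptsup : ∀ ω, (∫⁻ x, ENNReal.ofReal (stW d x) ∂(Ξ ω))
      = ⨆ k, ∫⁻ x, ENNReal.ofReal (f k x) ∂(Ξ ω) := by
    intro ω
    rw [← lintegral_iSup (fun k => (hfc k).measurable.ennreal_ofReal)
      (fun k l hkl x => ENNReal.ofReal_le_ofReal (hfmono x hkl))]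
    congr 1
    funext x
    apply le_antisymm
    · refine le_trans ?_ (le_iSup (fun k => ENNReal.ofReal (f k x)) (Nat.ceil ‖x‖))
      have h1 : stBump d (Nat.ceil ‖x‖) x = 1 :=
        stBump_one x ((Nat.le_ceil ‖x‖).trans (by norm_num))
      have : f (Nat.ceil ‖x‖) x = stW d x := by rw [hf]; simp [h1]
      rw [this]
    · exact iSup_le fun k => ENNReal.ofReal_le_ofReal (hfle k x)
  have hbound : ∫⁻ ω, (∫⁻ x, ENNReal.ofReal (stW d x) ∂(Ξ ω)) ∂P
      ≤ ENNReal.ofReal (ρ * ∫ x, stW d x) := by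
    rw [lintegral_congr hptsup]
    rw [lintegral_iSup hmeasF
      (fun k l hkl ω => lintegral_mono fun x => ENNReal.ofReal_le_ofReal (hfmono x hkl))]
    refine iSup_le fun k => ?_
    have h5 : ∫⁻ ω, (∫⁻ x, ENNReal.ofReal (f k x) ∂(Ξ ω)) ∂P = ENNReal.ofReal (∫ ω, G k ω ∂P) := by
      simp_rw [hFk]
      exact (MeasureTheory.ofReal_integral_eq_lintegral_ofReal (hGint k)
        (Filter.Eventually.of_forall (hGnn k))).symm
    rw [h5, hGmean k]
    apply ENNReal.ofReal_le_ofReal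
    have h6 : ∫ x, f k x ≤ ∫ x, stW d x :=
      integral_mono (hintLeb k) (stW_integrable d) (fun x => hfle k x)
    exact mul_le_mul_of_nonneg_left h6 hρ.le
  exact ae_lt_top hWmeas (lt_of_le_of_lt hbound ENNReal.ofReal_lt_top).ne


/-- **Almost sure exactness of band-limited linear statistics.**
If the structure function `S` of a random measure `Ξ` on `ℝ^d` with intensity `ρ > 0`
vanishes on the nonempty open set `U`, then on a single event of probability one, for
every Schwartz function `φ` whose Fourier transform has compact support contained in
`U`, the linear statistic `∫ φ dΞ_ω` is defined and equals its mean `ρ ∫ φ(x) dx`. -/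
theorem generalized_stealthy_as_exact_linear_statistics
    {d : ℕ} {Ω : Type*} [MeasurableSpace Ω] (P : Measure Ω) [IsProbabilityMeasure P]
    (Ξ : Ω → Measure (Ed d)) (hΞmeas : Measurable Ξ)
    (hΞloc : ∀ ω, IsLocallyFiniteMeasure (Ξ ω))
    (ρ : ℝ) (hρ : 0 < ρ) (S : Ed d → ℝ) (hSnonneg : ∀ ξ, 0 ≤ S ξ)
    (hIS : HasIntensityAndStructure P Ξ ρ S)
    (U : Set (Ed d)) (hUopen : IsOpen U) (hUne : U.Nonempty)
    (hgap : ∀ ξ ∈ U, S ξ = 0) :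
    ∀ᵐ ω ∂P, ∀ φ : SchwartzMap (Ed d) ℂ,
      HasCompactSupport (𝓕 (fun x => (φ x : ℂ))) →
      tsupport (𝓕 (fun x => (φ x : ℂ))) ⊆ U →
      Integrable (fun x => φ x) (Ξ ω) ∧
        (∫ x, φ x ∂(Ξ ω)) = (ρ : ℂ) * (∫ x, φ x) := by
  choose e he1 he2 using fun M : ℕ => stDense U M
  have hA := eventA P Ξ hΞmeas hΞloc ρ hρ S hIS
  have hE : ∀ᵐ ω ∂P, ∀ (M i : ℕ), ∫ x, (e M i) x ∂(Ξ ω) = (ρ:ℂ) * ∫ x, (e M i) x := by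
    rw [ae_all_iff]
    intro M
    rw [ae_all_iff]
    intro i
    exact exact_single P Ξ ρ S hIS U hgap (e M i) (he1 M i).1
  filter_upwards [hA, hE] with ω hwA hwE
  intro φ hφc hφU
  -- integrability of Schwartz functions with respect to `Ξ ω`
  have hWintΞ : Integrable (stW d) (Ξ ω) := by
    refine ⟨(stW_continuous d).aestronglyMeasurable, ?_⟩
    show (∫⁻ x, (‖stW d x‖₊ : ENNReal) ∂(Ξ ω)) < ⊤
    have hcongr : (fun x => ((‖stW d x‖₊ : ENNReal))) = fun x => ENNReal.ofReal (stW d x) := by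
      funext x
      exact Real.enorm_eq_ofReal (stW_pos x).le
    rw [hcongr]
    exact hwA
  have hIntOf : ∀ ψ : SchwartzMap (Ed d) ℂ, Integrable (⇑ψ) (Ξ ω) := by
    intro ψ
    refine (hWintΞ.const_mul (2^(2*d+2) * stSB ψ)).mono'
      ψ.continuous.aestronglyMeasurable ?_
    filter_upwards with x
    calc ‖ψ x‖ ≤ 2^(2*d+2) * stSB ψ * stW d x := schwartz_le_stW ψ x
      _ = 2^(2*d+2) * stSB ψ * stW d x := rfl
  refine ⟨hIntOf φ, ?_⟩
  -- the approximating sequence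
  obtain ⟨M, hM⟩ := exists_nat_ge (stSB φ)
  have hφmem : φ ∈ stC U M := ⟨hφU, hM⟩
  have hseq : ∀ j : ℕ, ∃ i, ∫ ξ, ‖𝓕 ⇑(e M i) ξ - 𝓕 ⇑φ ξ‖ < 1/(j+1) := fun j =>
    he2 M φ hφmem (1/(j+1)) (by positivity)
  choose idx hidx using hseq
  set ψ : ℕ → SchwartzMap (Ed d) ℂ := fun j => e M (idx j) with hψdef
  have hψmem : ∀ j, ψ j ∈ stC U M := fun j => he1 M (idx j)
  have hpt : ∀ (j : ℕ) (x : Ed d), ‖ψ j x - φ x‖ ≤ 1/(j+1) := by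
    intro j x
    have hms := map_sub (SchwartzMap.fourierTransformCLM ℂ (V := Ed d) (E := ℂ)) (ψ j) φ
    have h3 : 𝓕 ⇑(ψ j - φ) = 𝓕 ⇑(ψ j) - 𝓕 ⇑φ := by
      calc 𝓕 ⇑(ψ j - φ)
          = ⇑(SchwartzMap.fourierTransformCLM ℂ (ψ j - φ)) :=
            rfl
        _ = ⇑(SchwartzMap.fourierTransformCLM ℂ (ψ j) - SchwartzMap.fourierTransformCLM ℂ φ) := by
            rw [hms]
        _ = ⇑(SchwartzMap.fourierTransformCLM ℂ (ψ j)) - ⇑(SchwartzMap.fourierTransformCLM ℂ φ) := by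
            funext ξ; simp [SchwartzMap.sub_apply]
        _ = 𝓕 ⇑(ψ j) - 𝓕 ⇑φ := by
            rfl
    calc ‖ψ j x - φ x‖ = ‖(ψ j - φ) x‖ := by rw [SchwartzMap.sub_apply]
      _ ≤ ∫ ξ, ‖𝓕 ⇑(ψ j - φ) ξ‖ := stBernstein (ψ j - φ) x
      _ = ∫ ξ, ‖𝓕 ⇑(ψ j) ξ - 𝓕 ⇑φ ξ‖ := by
          rw [h3]
          congr 1
      _ ≤ 1/(j+1) := (hidx j).le
  have htendpt : ∀ x : Ed d, Filter.Tendsto (fun j => ψ j x) Filter.atTop (nhds (φ x)) := by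
    intro x
    rw [tendsto_iff_dist_tendsto_zero]
    refine squeeze_zero (fun j => dist_nonneg) (fun j => ?_)
      tendsto_one_div_add_atTop_nhds_zero_nat
    rw [dist_eq_norm]
    exact hpt j x
  have hbd : ∀ (j : ℕ) (x : Ed d), ‖ψ j x‖ ≤ 2^(2*d+2) * M * stW d x := by
    intro j x
    calc ‖ψ j x‖ ≤ 2^(2*d+2) * stSB (ψ j) * stW d x := schwartz_le_stW (ψ j) x
      _ ≤ 2^(2*d+2) * M * stW d x := by
          have h1 := (hψmem j).2
          have h2 := (stW_pos x).le
          have h3 : (0:ℝ) ≤ 2^(2*d+2) := by positivity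
          exact mul_le_mul_of_nonneg_right (mul_le_mul_of_nonneg_left h1 h3) h2
  have hlim1 : Filter.Tendsto (fun j => ∫ x, ψ j x ∂(Ξ ω)) Filter.atTop
      (nhds (∫ x, φ x ∂(Ξ ω))) :=
    tendsto_integral_of_dominated_convergence (fun x => 2^(2*d+2) * M * stW d x)
      (fun j => (ψ j).continuous.aestronglyMeasurable)
      (hWintΞ.const_mul _)
      (fun j => Filter.Eventually.of_forall (hbd j))
      (Filter.Eventually.of_forall htendpt)
  have hlim2 : Filter.Tendsto (fun j => ∫ x, ψ j x) Filter.atTop (nhds (∫ x, φ x)) :=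
    tendsto_integral_of_dominated_convergence (fun x => 2^(2*d+2) * M * stW d x)
      (fun j => (ψ j).continuous.aestronglyMeasurable)
      ((stW_integrable d).const_mul _)
      (fun j => Filter.Eventually.of_forall (hbd j))
      (Filter.Eventually.of_forall htendpt)
  have heq : (fun j => ∫ x, ψ j x ∂(Ξ ω)) = fun j => (ρ:ℂ) * ∫ x, ψ j x :=
    funext fun j => hwE M (idx j)
  have h9 : Filter.Tendsto (fun j => (ρ:ℂ) * ∫ x, ψ j x) Filter.atTop
      (nhds (∫ x, φ x ∂(Ξ ω))) := by
    rw [← heq]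
    exact hlim1
  have h10 : Filter.Tendsto (fun j => (ρ:ℂ) * ∫ x, ψ j x) Filter.atTop
      (nhds ((ρ:ℂ) * ∫ x, φ x)) := hlim2.const_mul _
  exact tendsto_nhds_unique h9 h10

end
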